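/- Let T be a finite nonempty index set, let μ : T → ℝ≥0 be nonnegative weights, let d ≥ 1, and let b : T → ℝ^d satisfy ‖b(t)‖₂ ≤ 1 for all t ∈ T (Euclidean norm). Define the symmetric positive semidefinite matrix Σ := Σ_{t∈T} μ(t) b(t) b(t)ᵀ, and let λ_min(Σ) be its smallest eigenvalue. Then for every x ∈ ℝ^d, Σ_{t∈T} μ(t) |⟨x, b(t)⟩| ≥ λ_min(Σ) · ‖x‖₂, where ⟨·,·⟩ is the Euclidean inner product. -/

import Mathlib

open Matrix

/-- The Euclidean norm of a vector. -/
noncomputable def eucNorm {n : Type*} [Fintype n] (x : n → ℝ) : ℝ :=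
  Real.sqrt (∑ i, x i ^ 2)

lemma rayleigh_lower {d : ℕ} (A : Matrix (Fin d) (Fin d) ℝ) (hA : A.IsHermitian)
    (c : ℝ) (hc : ∀ i, c ≤ hA.eigenvalues i) (x : Fin d → ℝ) :
    c * (x ⬝ᵥ x) ≤ x ⬝ᵥ A *ᵥ x := by
  set U : Matrix (Fin d) (Fin d) ℝ := (hA.eigenvectorUnitary : Matrix (Fin d) (Fin d) ℝ) with hU
  set y : Fin d → ℝ := x ᵥ* U with hy
  have hyy : y ⬝ᵥ y = x ⬝ᵥ x := by
    have h1 : U * star U = 1 := (Matrix.mem_unitaryGroup_iff).mp hA.eigenvectorUnitary.2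
    calc y ⬝ᵥ y = x ⬝ᵥ U *ᵥ y := (dotProduct_mulVec x U y).symm
    _ = x ⬝ᵥ U *ᵥ (star U *ᵥ x) := by
        rw [hy, ← Matrix.mulVec_transpose]
        rfl
    _ = x ⬝ᵥ (U * star U) *ᵥ x := by rw [mulVec_mulVec]
    _ = x ⬝ᵥ x := by rw [h1, one_mulVec]
  have hquad : x ⬝ᵥ A *ᵥ x = ∑ i, hA.eigenvalues i * y i ^ 2 := by
    conv_lhs => rw [hA.spectral_theorem]
    rw [Unitary.conjStarAlgAut_apply]
    rw [← hU, ← mulVec_mulVec, ← mulVec_mulVec, dotProduct_mulVec x U, ← hy]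
    have hstar : star U *ᵥ x = y := by rw [hy, ← Matrix.mulVec_transpose]; rfl
    rw [hstar, dotProduct_mulVec]
    simp only [vecMul_diagonal, dotProduct, sq]
    exact Finset.sum_congr rfl fun i _ => by simp [Function.comp]; ring
  calc c * (x ⬝ᵥ x) = ∑ i, c * y i ^ 2 := by
        rw [← hyy]; simp [dotProduct, Finset.mul_sum, sq]
    _ ≤ ∑ i, hA.eigenvalues i * y i ^ 2 :=
        Finset.sum_le_sum fun i _ => mul_le_mul_of_nonneg_right (hc i) (sq_nonneg _)
    _ = x ⬝ᵥ A *ᵥ x := hquad.symm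

/-- Key inequality (Eq. (11)) in the proof of Theorem 3: for belief vectors of Euclidean
norm at most one, `Σ_t μ(t) |⟨x, b(t)⟩| ≥ λ_min(Σ) ‖x‖₂` where
`Σ = Σ_t μ(t) b(t) b(t)ᵀ`. -/
theorem weighted_abs_inner_ge_min_eigenvalue
    {T : Type*} [Fintype T] [Nonempty T]
    (μ : T → ℝ) (hμ : ∀ t, 0 ≤ μ t)
    (d : ℕ) (hd : 1 ≤ d)
    (b : T → Fin d → ℝ) (hb : ∀ t, eucNorm (b t) ≤ 1)
    (Sigm : Matrix (Fin d) (Fin d) ℝ)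
    (hSig : Sigm = ∑ t, μ t • Matrix.vecMulVec (b t) (b t))
    (hherm : Sigm.IsHermitian) :
    ∀ x : Fin d → ℝ,
      (⨅ i, hherm.eigenvalues i) * eucNorm x ≤ ∑ t, μ t * |∑ i, x i * b t i| := by
  intro x
  have hdne : Nonempty (Fin d) := ⟨⟨0, hd⟩⟩
  set L := ⨅ i, hherm.eigenvalues i with hL
  set N := eucNorm x with hN
  set S := ∑ t, μ t * |∑ i, x i * b t i| with hS
  have hN0 : 0 ≤ N := Real.sqrt_nonneg _
  have hS0 : 0 ≤ S :=
    Finset.sum_nonneg fun t _ => mul_nonneg (hμ t) (abs_nonneg _)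
  have hNsq : x ⬝ᵥ x = N ^ 2 := by
    rw [hN, eucNorm, Real.sq_sqrt (Finset.sum_nonneg fun i _ => sq_nonneg _)]
    simp [dotProduct, sq]
  -- Cauchy-Schwarz: each inner product is at most N
  have hcs : ∀ t, |∑ i, x i * b t i| ≤ N := by
    intro t
    have h1 : (∑ i, x i * b t i) ^ 2 ≤ (∑ i, x i ^ 2) * (∑ i, b t i ^ 2) :=
      Finset.sum_mul_sq_le_sq_mul_sq _ _ _
    have h2 : |∑ i, x i * b t i| = Real.sqrt ((∑ i, x i * b t i) ^ 2) :=
      (Real.sqrt_sq_eq_abs _).symm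
    rw [h2]
    calc Real.sqrt ((∑ i, x i * b t i) ^ 2)
        ≤ Real.sqrt ((∑ i, x i ^ 2) * (∑ i, b t i ^ 2)) := Real.sqrt_le_sqrt h1
      _ = eucNorm x * eucNorm (b t) := by
          rw [Real.sqrt_mul (Finset.sum_nonneg fun i _ => sq_nonneg _)]; rfl
      _ ≤ N * 1 := by
          apply mul_le_mul_of_nonneg_left (hb t) hN0
      _ = N := mul_one N
  -- quadratic form
  have hquad : x ⬝ᵥ Sigm *ᵥ x = ∑ t, μ t * (∑ i, x i * b t i) ^ 2 := by
    have hrhs : ∀ t, μ t * (∑ i, x i * b t i) ^ 2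
        = ∑ i, ∑ j, x i * (μ t * (b t i * b t j) * x j) := by
      intro t
      rw [sq, Finset.sum_mul_sum, Finset.mul_sum]
      refine Finset.sum_congr rfl fun i _ => ?_
      rw [Finset.mul_sum]
      exact Finset.sum_congr rfl fun j _ => by ring
    simp only [hSig, dotProduct, mulVec, Matrix.sum_apply, Matrix.smul_apply,
      vecMulVec_apply, smul_eq_mul, hrhs]
    conv_rhs => rw [Finset.sum_comm]
    refine Finset.sum_congr rfl fun i _ => ?_
    rw [Finset.mul_sum]
    conv_rhs => rw [Finset.sum_comm]
    refine Finset.sum_congr rfl fun j _ => ?_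
    rw [Finset.sum_mul, Finset.mul_sum]
  have hLc : ∀ i, L ≤ hherm.eigenvalues i := fun i =>
    ciInf_le (Finite.bddBelow_range _) i
  have key : L * N ^ 2 ≤ S * N := by
    calc L * N ^ 2 = L * (x ⬝ᵥ x) := by rw [hNsq]
      _ ≤ x ⬝ᵥ Sigm *ᵥ x := rayleigh_lower Sigm hherm L hLc x
      _ = ∑ t, μ t * (∑ i, x i * b t i) ^ 2 := hquad
      _ ≤ ∑ t, (μ t * |∑ i, x i * b t i|) * N := by
          apply Finset.sum_le_sum
          intro t _
          have habs : (∑ i, x i * b t i) ^ 2 = |∑ i, x i * b t i| * |∑ i, x i * b t i| := by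
            rw [sq]; exact (abs_mul_abs_self _).symm
          rw [habs, ← mul_assoc]
          exact mul_le_mul_of_nonneg_left (hcs t)
            (mul_nonneg (hμ t) (abs_nonneg _))
      _ = S * N := by rw [hS, Finset.sum_mul]
  rcases eq_or_lt_of_le hN0 with h0 | hpos
  · rw [← h0, mul_zero]; exact hS0
  · have := key
    rw [sq, ← mul_assoc] at this
    exact le_of_mul_le_mul_right this hpos
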